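/- For any random variable A with finite support of size m > 16, the squared ℓ2-norm of its distribution plus its Shannon entropy is at most 1/m + log m, i.e., ‖A‖_2^2 + H(A) ≤ 1/m + log m (logarithms in base 2). -/

import Mathlib

open Finset

lemma aux_sqrt (t : ℝ) (ht : 0 < t) :
    (Real.sqrt t - 1) ^ 2 ≤ t * Real.log t - t + 1 := by
  have hs : 0 < Real.sqrt t := Real.sqrt_pos.2 ht
  have hst : Real.sqrt t * Real.sqrt t = t := Real.mul_self_sqrt ht.le
  have h1 : Real.log (Real.sqrt t)⁻¹ ≤ (Real.sqrt t)⁻¹ - 1 :=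
    Real.log_le_sub_one_of_pos (inv_pos.2 hs)
  rw [Real.log_inv] at h1
  have hlog : 1 - (Real.sqrt t)⁻¹ ≤ Real.log (Real.sqrt t) := by linarith
  have h2 : Real.log t = 2 * Real.log (Real.sqrt t) := by
    rw [Real.log_sqrt ht.le]; ring
  have h3 : t * (Real.sqrt t)⁻¹ = Real.sqrt t := by
    rw [← hst]; field_simp; rw [Real.sqrt_sq hs.le]
  have h4 : t * (1 - (Real.sqrt t)⁻¹) ≤ t * Real.log (Real.sqrt t) :=
    mul_le_mul_of_nonneg_left hlog ht.le
  nlinarith [h4, h3, hst, h2]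

lemma key_ineq (m t : ℝ) (hm : 17 ≤ m) (ht : 0 ≤ t) (htm : t ≤ m) :
    Real.log 2 / m * (t - 1) ^ 2 ≤ t * Real.log t - t + 1 := by
  have hm0 : (0 : ℝ) < m := by linarith
  have hl2 : (0 : ℝ) < Real.log 2 := Real.log_pos one_lt_two
  have hl2' : Real.log 2 < 0.6931471808 := Real.log_two_lt_d9
  rw [div_mul_eq_mul_div, div_le_iff₀ hm0]
  rcases eq_or_lt_of_le ht with h0 | ht0
  · rw [← h0]
    norm_num [Real.log_zero]
    nlinarith
  · by_cases h6 : t ≤ 6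
    · have hA := aux_sqrt t ht0
      have hs : 0 < Real.sqrt t := Real.sqrt_pos.2 ht0
      have hst : Real.sqrt t * Real.sqrt t = t := Real.mul_self_sqrt ht0.le
      have hs25 : Real.sqrt t ≤ 2.5 := by
        rw [show (2.5 : ℝ) = Real.sqrt 6.25 by
          rw [show (6.25 : ℝ) = 2.5 ^ 2 by norm_num, Real.sqrt_sq]; norm_num]
        exact Real.sqrt_le_sqrt (by linarith)
      have h17 : Real.log 2 * (t - 1) ^ 2 ≤ 17 * (Real.sqrt t - 1) ^ 2 := by
        nlinarith [sq_nonneg (Real.sqrt t - 1), sq_nonneg (Real.sqrt t + 1), hs.le]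
      nlinarith [sq_nonneg (Real.sqrt t - 1)]
    · push_neg at h6
      have hlogt : 1 + Real.log 2 ≤ Real.log t := by
        have h3 : (1 : ℝ) ≤ Real.log 3 := by
          rw [Real.le_log_iff_exp_le (by norm_num : (0:ℝ) < 3)]
          have := Real.exp_one_lt_d9
          linarith
        have h6' : Real.log 6 ≤ Real.log t := Real.log_le_log (by norm_num) h6.le
        have : Real.log 6 = Real.log 2 + Real.log 3 := by
          rw [← Real.log_mul (by norm_num) (by norm_num)]; norm_num
        linarith
      nlinarith [mul_le_mul_of_nonneg_left hlogt (le_of_lt (by linarith : (0:ℝ) < t)),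
        mul_pos hl2 (show (0:ℝ) < t by linarith)]

/-- For a distribution on a set of size `m > 16`, the squared ℓ₂-norm plus
the Shannon entropy (base 2) is at most `1/m + log₂ m`. -/
theorem l2_add_entropy_le {α : Type*} [Fintype α] (m : ℕ) (hm : 16 < m)
    (hcard : Fintype.card α = m) (μ : α → ℝ)
    (hnn : ∀ a, 0 ≤ μ a) (hsum : ∑ a, μ a = 1) :
    (∑ a, (μ a) ^ 2) + ∑ a, μ a * Real.logb 2 (μ a)⁻¹
      ≤ 1 / (m : ℝ) + Real.logb 2 m := by
  have hm17 : (17 : ℝ) ≤ m := by exact_mod_cast hm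
  have hm0 : (0 : ℝ) < m := by linarith
  have hl2 : (0 : ℝ) < Real.log 2 := Real.log_pos one_lt_two
  have hle1 : ∀ a, μ a ≤ 1 := by
    intro a
    have h := Finset.single_le_sum (f := μ) (fun i _ => hnn i) (Finset.mem_univ a)
    linarith [hsum ▸ h]
  set S2 := ∑ a, (μ a) ^ 2 with hS2
  set SL := ∑ a, μ a * Real.log (μ a) with hSL
  have key : ∀ a ∈ Finset.univ, Real.log 2 / m * ((m : ℝ) * μ a - 1) ^ 2
      ≤ ((m : ℝ) * μ a) * Real.log ((m : ℝ) * μ a) - (m : ℝ) * μ a + 1 := by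
    intro a _
    exact key_ineq m _ hm17 (mul_nonneg hm0.le (hnn a))
      (by nlinarith [hle1 a])
  have hsle := Finset.sum_le_sum key
  have hcardsum : ∑ _a : α, (1 : ℝ) = (m : ℝ) := by
    simp [hcard]
  have hLHS : ∑ a, Real.log 2 / m * ((m : ℝ) * μ a - 1) ^ 2
      = Real.log 2 / m * ((m : ℝ) ^ 2 * S2 - m) := by
    rw [← Finset.mul_sum]
    congr 1
    have : ∀ a, ((m : ℝ) * μ a - 1) ^ 2
        = (m : ℝ) ^ 2 * (μ a) ^ 2 - 2 * m * μ a + 1 := fun a => by ring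
    rw [Finset.sum_congr rfl fun a _ => this a]
    rw [Finset.sum_add_distrib, Finset.sum_sub_distrib, ← Finset.mul_sum, ← Finset.mul_sum,
      hsum, hcardsum, ← hS2]
    ring
  have hRHS : ∑ a, (((m : ℝ) * μ a) * Real.log ((m : ℝ) * μ a) - (m : ℝ) * μ a + 1)
      = (m : ℝ) * Real.log m + (m : ℝ) * SL := by
    have h1 : ∀ a, ((m : ℝ) * μ a) * Real.log ((m : ℝ) * μ a)
        = Real.log m * (m : ℝ) * μ a + (m : ℝ) * (μ a * Real.log (μ a)) := by
      intro a
      rcases eq_or_lt_of_le (hnn a) with h | h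
      · rw [← h]; simp
      · rw [Real.log_mul (ne_of_gt hm0) (ne_of_gt h)]; ring
    rw [Finset.sum_congr rfl fun a _ => by rw [h1 a]]
    simp only [Finset.sum_add_distrib, Finset.sum_sub_distrib, ← Finset.mul_sum]
    rw [hsum, hcardsum, ← hSL]
    ring
  rw [hLHS, hRHS] at hsle
  have hmain : Real.log 2 * m * S2 - Real.log 2 ≤ m * Real.log m + m * SL := by
    have e : Real.log 2 / m * ((m : ℝ) ^ 2 * S2 - m)
        = Real.log 2 * m * S2 - Real.log 2 := by
      field_simp
    linarith [e ▸ hsle]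
  have hgoalsum : ∑ a, μ a * Real.logb 2 (μ a)⁻¹ = -SL / Real.log 2 := by
    simp only [Real.logb, Real.log_inv]
    rw [show -SL = ∑ a, -(μ a * Real.log (μ a)) by rw [hSL]; rw [← Finset.sum_neg_distrib],
      Finset.sum_div]
    exact Finset.sum_congr rfl fun a _ => by ring
  rw [hgoalsum, Real.logb]
  rw [show (1 : ℝ) / m + Real.log m / Real.log 2
      = (Real.log 2 + m * Real.log m) / (m * Real.log 2) by field_simp]
  rw [show S2 + -SL / Real.log 2
      = (Real.log 2 * m * S2 - m * SL) / (m * Real.log 2) by field_simp; ring]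
  rw [div_le_div_iff_of_pos_right (mul_pos hm0 hl2)]
  linarith
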